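/- The weighted-configuration identity holds for g = 6 and w = 1: for any set S of 6 distinct real numbers, the sum over all weighted configurations of S with total weight 1 of their evaluations is zero. -/

import Mathlib

open Finset Polynomial

/-- The unsigned Stirling number of the first kind `[n, k]`, defined as the coefficient of
`x^k` in the ascending factorial `x (x+1) ⋯ (x+n-1)`. -/
noncomputable def stirling1 (n k : ℕ) : ℕ := (ascPochhammer ℕ n).coeff k

/-- `IsStirlingPoly P` says that for every `w`, `P w` is the (unique) real polynomial of degree
at most `2w` with `(P w).eval n = [n, n-w]` (unsigned Stirling number of the first kind) for
every integer `n ≥ w`; i.e. `P w` plays the role of `P_w` from the paper. -/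
def IsStirlingPoly (P : ℕ → Polynomial ℝ) : Prop :=
  ∀ w : ℕ, (P w).natDegree ≤ 2 * w ∧
    ∀ n : ℕ, w ≤ n → (P w).eval (n : ℝ) = (stirling1 n (n - w) : ℝ)

open scoped Classical in
/-- The sum, over all weighted configurations of the finite set `S` with total weight `w`, of
their evaluations.  A weighted configuration is recorded as a length `r` together with an
`r`-tuple `f`, where `(f i).1 = Sᵢ` are the (nonempty, pairwise disjoint, covering `S`) parts
of the configuration and `(f i).2 = wᵢ` are their weights, `∑ i, wᵢ = w`.  Its evaluation is
`(-1)^r · (1/r) · ∏ i, P_{wᵢ}(tᵢ)` where `tᵢ = ∑ c ∈ Sᵢ, c`.  (Since the parts are nonempty and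
pairwise disjoint, `r ≤ S.card`, and each weight is at most `w`, so every weighted
configuration occurs exactly once in the sum below.) -/
noncomputable def weightedConfigSum (P : ℕ → Polynomial ℝ) (S : Finset ℝ) (w : ℕ) : ℝ :=
  ∑ r ∈ Finset.range (S.card + 1),
    ∑ f ∈ (Fintype.piFinset fun _ : Fin r => S.powerset ×ˢ Finset.range (w + 1)).filter
        (fun f => (∀ i, ((f i).1).Nonempty) ∧
          (∀ i j, i ≠ j → Disjoint (f i).1 (f j).1) ∧
          (Finset.univ.biUnion fun i => (f i).1) = S ∧
          ∑ i, (f i).2 = w),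
      (-1 : ℝ) ^ r * (1 / (r : ℝ)) * ∏ i, (P (f i).2).eval (∑ c ∈ (f i).1, c)

lemma stirling1_self (n : ℕ) : stirling1 n n = 1 := by
  unfold stirling1
  have h := monic_ascPochhammer ℕ n
  have hd : (ascPochhammer ℕ n).natDegree = n := ascPochhammer_natDegree ℕ n
  have h2 := h.coeff_natDegree
  rwa [hd] at h2

lemma stirling1_succ_two (n : ℕ) : 2 * stirling1 (n+1) n = (n+1) * n := by
  induction n with
  | zero => simp [stirling1, ascPochhammer_one]
  | succ n ih =>
      have h : stirling1 (n+2) (n+1) = stirling1 (n+1) n + (n+1) * stirling1 (n+1) (n+1) := by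
        unfold stirling1
        rw [ascPochhammer_succ_right, mul_add, coeff_add, coeff_mul_X]
        congr 1
        rw [← C_eq_natCast, coeff_mul_C]
        exact mul_comm _ _
      rw [h, stirling1_self, Nat.mul_add, ih]
      ring

lemma P_zero_eval (P : ℕ → Polynomial ℝ) (hP : IsStirlingPoly P) (x : ℝ) :
    (P 0).eval x = 1 := by
  obtain ⟨hdeg, hval⟩ := hP 0
  have h0 : P 0 = C ((P 0).coeff 0) := eq_C_of_natDegree_le_zero (by simpa using hdeg)
  have h1 := hval 0 (le_refl 0)
  rw [h0] at h1 ⊢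
  simp only [eval_C] at h1 ⊢
  rw [h1]
  norm_num [stirling1_self]

lemma P_one_eval (P : ℕ → Polynomial ℝ) (hP : IsStirlingPoly P) (x : ℝ) :
    (P 1).eval x = x * (x - 1) / 2 := by
  obtain ⟨hdeg, hval⟩ := hP 1
  have hQ : P 1 = C (1/2) * (X * X - X) := by
    apply eq_of_infinite_eval_eq
    apply Set.Infinite.mono (s := Set.range fun n : ℕ => ((n + 1 : ℕ) : ℝ))
    · rintro _ ⟨n, rfl⟩
      have h1 := hval (n+1) (by omega)
      simp only [Nat.add_sub_cancel] at h1
      have h2 : (stirling1 (n+1) n : ℝ) = ((n+1 : ℕ) : ℝ) * (((n+1 : ℕ) : ℝ) - 1) / 2 := by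
        have h3 : ((2 * stirling1 (n+1) n : ℕ) : ℝ) = (((n+1) * n : ℕ) : ℝ) := by
          rw [stirling1_succ_two n]
        push_cast at h3 ⊢
        linarith
      simp only [Set.mem_setOf_eq, h1, h2]
      simp [eval_mul, eval_sub]
      ring
    · apply Set.infinite_range_of_injective
      intro a b hab
      simp only [Nat.cast_inj] at hab
      omega
  rw [hQ]
  simp [eval_mul, eval_sub]
  ring

open scoped Classical in
noncomputable def OPart (r : ℕ) (T : Finset ℝ) : Finset (Fin r → Finset ℝ) :=
  (Fintype.piFinset fun _ : Fin r => T.powerset).filter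
    (fun g => (∀ i, (g i).Nonempty) ∧ (∀ i j, i ≠ j → Disjoint (g i) (g j)) ∧
      Finset.univ.biUnion g = T)

lemma mem_OPart {r : ℕ} {T : Finset ℝ} {g : Fin r → Finset ℝ} :
    g ∈ OPart r T ↔ (∀ i, g i ⊆ T) ∧ (∀ i, (g i).Nonempty) ∧
      (∀ i j, i ≠ j → Disjoint (g i) (g j)) ∧ Finset.univ.biUnion g = T := by
  simp [OPart, Fintype.mem_piFinset, Finset.mem_powerset]

lemma OPart_card_le {r : ℕ} {T : Finset ℝ} {g : Fin r → Finset ℝ} (hg : g ∈ OPart r T) :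
    r ≤ T.card := by
  obtain ⟨hsub, hne, hdisj, hcov⟩ := mem_OPart.mp hg
  have hT : T.card = ∑ i : Fin r, (g i).card := by
    rw [← hcov, Finset.card_biUnion]
    intro i _ j _ hij
    exact hdisj i j hij
  calc r = ∑ _i : Fin r, 1 := by simp
    _ ≤ ∑ i : Fin r, (g i).card := Finset.sum_le_sum fun i _ => Finset.card_pos.mpr (hne i)
    _ = T.card := hT.symm

lemma OPart_eq_empty {r : ℕ} {T : Finset ℝ} (h : T.card < r) : OPart r T = ∅ := by
  rw [Finset.eq_empty_iff_forall_notMem]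
  intro g hg
  exact absurd (OPart_card_le hg) (by omega)

lemma OPart_zero_of_nonempty {T : Finset ℝ} (h : T.Nonempty) : OPart 0 T = ∅ := by
  rw [Finset.eq_empty_iff_forall_notMem]
  intro g hg
  obtain ⟨_, _, _, hcov⟩ := mem_OPart.mp hg
  rw [Finset.univ_eq_empty, Finset.biUnion_empty] at hcov
  exact h.ne_empty hcov.symm

lemma OPart_zero_empty : OPart 0 (∅ : Finset ℝ) = {fun i => i.elim0} := by
  ext g
  rw [mem_OPart, Finset.mem_singleton]
  constructor
  · intro _
    funext i
    exact i.elim0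
  · rintro rfl
    refine ⟨fun i => i.elim0, fun i => i.elim0, fun i => i.elim0, ?_⟩
    simp

lemma OPart_comp_equiv {r : ℕ} {T : Finset ℝ} {g : Fin r → Finset ℝ}
    (hg : g ∈ OPart r T) (e : Fin r ≃ Fin r) : (g ∘ e) ∈ OPart r T := by
  obtain ⟨h1, h2, h3, h4⟩ := mem_OPart.mp hg
  refine mem_OPart.mpr ⟨fun i => h1 _, fun i => h2 _,
    fun i j hij => h3 _ _ (fun h => hij (e.injective h)), ?_⟩
  rw [← h4]
  ext c
  simp only [Finset.mem_biUnion, Finset.mem_univ, true_and, Function.comp_apply]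
  exact ⟨fun ⟨i, hi⟩ => ⟨e i, hi⟩, fun ⟨i, hi⟩ => ⟨e.symm i, by simpa using hi⟩⟩

lemma OPart_peel {r : ℕ} {S : Finset ℝ} (F : (Fin (r+1) → Finset ℝ) → ℝ) :
    ∑ g ∈ OPart (r+1) S, F g =
      ∑ B ∈ S.powerset.filter (fun B => B.Nonempty), ∑ g ∈ OPart r (S \ B), F (Fin.cons B g) := by
  classical
  rw [← Finset.sum_sigma (S.powerset.filter (fun B => B.Nonempty))
    (fun B => OPart r (S \ B)) (fun x => F (Fin.cons x.1 x.2))]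
  symm
  apply Finset.sum_bij (fun (x : Σ _ : Finset ℝ, (Fin r → Finset ℝ)) _ => Fin.cons x.1 x.2)
  · -- membership
    rintro ⟨B, g⟩ hx
    rw [Finset.mem_sigma, Finset.mem_filter, Finset.mem_powerset] at hx
    obtain ⟨⟨hBS, hBne⟩, hgmem⟩ := hx
    obtain ⟨h1, h2, h3, h4⟩ := mem_OPart.mp hgmem
    refine mem_OPart.mpr ⟨?_, ?_, ?_, ?_⟩
    · intro i
      rcases Fin.eq_zero_or_eq_succ i with rfl | ⟨j, rfl⟩
      · simpa using hBS
      · simp only [Fin.cons_succ]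
        exact (h1 j).trans (Finset.sdiff_subset)
    · intro i
      rcases Fin.eq_zero_or_eq_succ i with rfl | ⟨j, rfl⟩
      · simpa using hBne
      · simpa using h2 j
    · intro i j hij
      rcases Fin.eq_zero_or_eq_succ i with rfl | ⟨i', rfl⟩ <;>
        rcases Fin.eq_zero_or_eq_succ j with rfl | ⟨j', rfl⟩
      · exact absurd rfl hij
      · simp only [Fin.cons_zero, Fin.cons_succ]
        exact Finset.disjoint_of_subset_right (h1 j') (Finset.disjoint_sdiff)
      · simp only [Fin.cons_zero, Fin.cons_succ]
        exact Finset.disjoint_of_subset_left (h1 i') (Finset.sdiff_disjoint)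
      · simp only [Fin.cons_succ]
        exact h3 i' j' (fun h => hij (by rw [h]))
    · ext c
      simp only [Finset.mem_biUnion, Finset.mem_univ, true_and]
      constructor
      · rintro ⟨i, hi⟩
        rcases Fin.eq_zero_or_eq_succ i with rfl | ⟨j, rfl⟩
        · exact hBS (by simpa using hi)
        · rw [Fin.cons_succ] at hi
          exact Finset.sdiff_subset (h1 j hi)
      · intro hc
        by_cases hcB : c ∈ B
        · exact ⟨0, by simpa using hcB⟩
        · have : c ∈ S \ B := Finset.mem_sdiff.mpr ⟨hc, hcB⟩
          rw [← h4] at this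
          obtain ⟨j, _, hj⟩ := Finset.mem_biUnion.mp this
          exact ⟨j.succ, by simpa using hj⟩
  · -- injectivity
    rintro ⟨B, g⟩ _ ⟨B', g'⟩ _ h
    have hB : B = B' := by
      have := congrFun h 0
      simpa using this
    have hg : g = g' := by
      funext j
      have := congrFun h j.succ
      simpa using this
    subst hB; subst hg; rfl
  · -- surjectivity
    intro g hg
    obtain ⟨h1, h2, h3, h4⟩ := mem_OPart.mp hg
    refine ⟨⟨g 0, Fin.tail g⟩, ?_, Fin.cons_self_tail g⟩
    rw [Finset.mem_sigma, Finset.mem_filter, Finset.mem_powerset]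
    refine ⟨⟨h1 0, h2 0⟩, mem_OPart.mpr ⟨?_, fun j => h2 _, ?_, ?_⟩⟩
    · intro j x hx
      rw [Finset.mem_sdiff]
      refine ⟨h1 _ hx, fun hx0 => ?_⟩
      exact Finset.disjoint_left.mp (h3 j.succ 0 (Fin.succ_ne_zero j)) hx hx0
    · intro i j hij
      exact h3 i.succ j.succ (fun h => hij (Fin.succ_injective _ h))
    · ext c
      simp only [Finset.mem_biUnion, Finset.mem_univ, true_and, Fin.tail, Finset.mem_sdiff]
      constructor
      · rintro ⟨j, hj⟩
        refine ⟨h1 _ hj, fun hc0 => ?_⟩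
        exact Finset.disjoint_left.mp (h3 j.succ 0 (Fin.succ_ne_zero j)) hj hc0
      · rintro ⟨hcS, hc0⟩
        rw [← h4] at hcS
        obtain ⟨i, _, hi⟩ := Finset.mem_biUnion.mp hcS
        rcases Fin.eq_zero_or_eq_succ i with rfl | ⟨j, rfl⟩
        · exact absurd hi hc0
        · exact ⟨j, hi⟩
  · intro x hx
    rfl

noncomputable def ONum (R : ℕ) (T : Finset ℝ) : ℝ :=
  ∑ r ∈ Finset.range R, ∑ g ∈ OPart r T, (-1 : ℝ) ^ r

lemma neg_one_pow_sub {a b : ℕ} (h : b ≤ a) : ((-1 : ℝ)) ^ (a - b) = (-1) ^ a * (-1) ^ b := by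
  have h2 : a + b = (a - b) + 2 * b := by omega
  calc ((-1 : ℝ)) ^ (a - b) = (-1) ^ (a - b) * ((-1 : ℝ) ^ 2) ^ b := by norm_num
    _ = (-1) ^ ((a - b) + 2 * b) := by rw [pow_add, ← pow_mul]
    _ = (-1) ^ (a + b) := by rw [← h2]
    _ = (-1) ^ a * (-1) ^ b := pow_add _ _ _

lemma sum_powerset_neg_one_real {T : Finset ℝ} (h : T.Nonempty) :
    ∑ B ∈ T.powerset, (-1 : ℝ) ^ B.card = 0 := by
  classical
  have := Finset.sum_powerset_neg_one_pow_card (x := T)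
  rw [if_neg h.ne_empty] at this
  calc ∑ B ∈ T.powerset, (-1 : ℝ) ^ B.card
      = ((∑ B ∈ T.powerset, (-1 : ℤ) ^ B.card : ℤ) : ℝ) := by push_cast; rfl
    _ = 0 := by rw [this]; norm_num

lemma sum_filter_nonempty_neg_one {T : Finset ℝ} (h : T.Nonempty) :
    ∑ B ∈ T.powerset.filter (fun B => B.Nonempty), (-1 : ℝ) ^ B.card = -1 := by
  classical
  have hsplit := Finset.sum_filter_add_sum_filter_not T.powerset (fun B => B.Nonempty)
    (fun B => (-1 : ℝ) ^ B.card)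
  have hnot : T.powerset.filter (fun B => ¬ B.Nonempty) = {∅} := by
    ext B
    simp [Finset.not_nonempty_iff_eq_empty]
    rintro rfl
    exact Finset.empty_subset T
  rw [hnot, Finset.sum_singleton, sum_powerset_neg_one_real h] at hsplit
  simp at hsplit
  linarith

lemma ONum_eval : ∀ n : ℕ, ∀ T : Finset ℝ, ∀ R : ℕ, T.card ≤ n → T.card < R →
    ONum R T = (-1) ^ T.card := by
  intro n
  induction n with
  | zero =>
    intro T R hn hR
    have hT : T = ∅ := Finset.card_eq_zero.mp (by omega)
    subst hT
    unfold ONum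
    obtain ⟨R', rfl⟩ : ∃ R', R = R' + 1 := ⟨R - 1, by omega⟩
    rw [Finset.sum_range_succ']
    have h0 : ∑ g ∈ OPart 0 (∅ : Finset ℝ), (-1 : ℝ) ^ (0:ℕ) = 1 := by
      rw [OPart_zero_empty]; simp
    rw [h0]
    have : ∀ r ∈ Finset.range R', ∑ g ∈ OPart (r+1) (∅ : Finset ℝ), (-1:ℝ)^(r+1) = 0 := by
      intro r _
      rw [OPart_eq_empty (by simp)]
      simp
    rw [Finset.sum_congr rfl this]
    simp
  | succ n ih =>
    intro T R hn hR
    rcases Finset.eq_empty_or_nonempty T with rfl | hT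
    · exact ih ∅ R (by simp) (by simpa using hR)
    obtain ⟨R', rfl⟩ : ∃ R', R = R' + 1 := ⟨R - 1, by omega⟩
    unfold ONum
    rw [Finset.sum_range_succ']
    rw [OPart_zero_of_nonempty hT]
    simp only [Finset.sum_empty, add_zero]
    have hpeel : ∀ r ∈ Finset.range R', ∑ g ∈ OPart (r+1) T, (-1:ℝ)^(r+1)
        = ∑ B ∈ T.powerset.filter (fun B => B.Nonempty),
            ∑ g ∈ OPart r (T \ B), (-1:ℝ)^(r+1) := by
      intro r _
      exact OPart_peel (fun _ => (-1:ℝ)^(r+1))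
    rw [Finset.sum_congr rfl hpeel, Finset.sum_comm]
    have hB : ∀ B ∈ T.powerset.filter (fun B => B.Nonempty),
        ∑ r ∈ Finset.range R', ∑ g ∈ OPart r (T \ B), (-1:ℝ)^(r+1)
          = -(-1:ℝ)^T.card * (-1:ℝ)^B.card := by
      intro B hBmem
      rw [Finset.mem_filter, Finset.mem_powerset] at hBmem
      obtain ⟨hBsub, hBne⟩ := hBmem
      have hcard : (T \ B).card = T.card - B.card := Finset.card_sdiff_of_subset hBsub
      have hBpos : 1 ≤ B.card := Finset.card_pos.mpr hBne
      have hBle : B.card ≤ T.card := Finset.card_le_card hBsub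
      have h1 : ∑ r ∈ Finset.range R', ∑ g ∈ OPart r (T \ B), (-1:ℝ)^(r+1)
          = -ONum R' (T \ B) := by
        unfold ONum
        rw [← Finset.sum_neg_distrib]
        apply Finset.sum_congr rfl
        intro r _
        rw [← Finset.sum_neg_distrib]
        apply Finset.sum_congr rfl
        intro g _
        ring
      rw [h1, ih (T \ B) R' (by omega) (by omega), hcard, neg_one_pow_sub hBle]
      ring
    rw [Finset.sum_congr rfl hB, ← Finset.mul_sum, sum_filter_nonempty_neg_one hT]
    ring

lemma weights_unique {m : ℕ} (a : Fin m → ℕ) (h : ∑ i, a i = 1) :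
    ∃ i0, ∀ i, a i = if i = i0 then 1 else 0 := by
  obtain ⟨i0, _, hi0⟩ := Finset.exists_ne_zero_of_sum_ne_zero (by rw [h]; exact one_ne_zero)
  have hle : a i0 ≤ 1 := h ▸ Finset.single_le_sum (fun i _ => Nat.zero_le _) (Finset.mem_univ i0)
  have h1 : a i0 = 1 := by omega
  have hrest : ∑ i ∈ Finset.univ.erase i0, a i = 0 := by
    have h2 := Finset.sum_erase_add Finset.univ a (Finset.mem_univ i0)
    omega
  refine ⟨i0, fun i => ?_⟩
  by_cases hi : i = i0
  · subst hi; simp [h1]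
  · rw [if_neg hi]
    exact (Finset.sum_eq_zero_iff).mp hrest i (Finset.mem_erase.mpr ⟨hi, Finset.mem_univ i⟩)

open scoped Classical in
lemma inner_step (P : ℕ → Polynomial ℝ) (hP0 : ∀ x, (P 0).eval x = 1) (S : Finset ℝ) (r : ℕ) :
    ∑ f ∈ (Fintype.piFinset fun _ : Fin (r+1) => S.powerset ×ˢ Finset.range (1 + 1)).filter
        (fun f => (∀ i, ((f i).1).Nonempty) ∧
          (∀ i j, i ≠ j → Disjoint (f i).1 (f j).1) ∧
          (Finset.univ.biUnion fun i => (f i).1) = S ∧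
          ∑ i, (f i).2 = 1),
      (-1 : ℝ) ^ (r+1) * (1 / ((r+1 : ℕ) : ℝ)) * ∏ i, (P (f i).2).eval (∑ c ∈ (f i).1, c)
    = ∑ p ∈ (OPart (r+1) S) ×ˢ (Finset.univ : Finset (Fin (r+1))),
        (-1 : ℝ) ^ (r+1) * (1 / ((r+1 : ℕ) : ℝ)) * (P 1).eval (∑ c ∈ p.1 p.2, c) := by
  symm
  apply Finset.sum_bij (fun (p : (Fin (r+1) → Finset ℝ) × Fin (r+1)) _ =>
    fun i => (p.1 i, if i = p.2 then 1 else 0))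
  · rintro ⟨g, i0⟩ hp
    rw [Finset.mem_product] at hp
    obtain ⟨hg, -⟩ := hp
    obtain ⟨h1, h2, h3, h4⟩ := mem_OPart.mp hg
    rw [Finset.mem_filter]
    refine ⟨?_, h2, h3, h4, ?_⟩
    · rw [Fintype.mem_piFinset]
      intro i
      rw [Finset.mem_product]
      exact ⟨Finset.mem_powerset.mpr (h1 i), Finset.mem_range.mpr (by split <;> omega)⟩
    · rw [Finset.sum_ite_eq' Finset.univ i0 (fun _ => 1)]
      simp
  · rintro ⟨g, i0⟩ hp ⟨g', i0'⟩ hp' h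
    have hgg : g = g' := by
      funext i
      exact congrArg Prod.fst (congrFun h i)
    have hii : i0 = i0' := by
      have h2 := congrArg Prod.snd (congrFun h i0)
      simp only [if_pos rfl] at h2
      by_contra hne
      rw [if_neg hne] at h2
      exact one_ne_zero h2
    rw [hgg, hii]
  · intro f hf
    rw [Finset.mem_filter] at hf
    obtain ⟨hpi, hne, hdisj, hcov, hsum⟩ := hf
    obtain ⟨i0, hw⟩ := weights_unique (fun i => (f i).2) hsum
    refine ⟨⟨fun i => (f i).1, i0⟩, ?_, ?_⟩
    · rw [Finset.mem_product]
      refine ⟨mem_OPart.mpr ⟨?_, hne, hdisj, hcov⟩, Finset.mem_univ _⟩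
      intro i
      have := Fintype.mem_piFinset.mp hpi i
      rw [Finset.mem_product] at this
      exact Finset.mem_powerset.mp this.1
    · funext i
      exact Prod.ext rfl (hw i).symm
  · rintro ⟨g, i0⟩ hp
    beta_reduce
    congr 1
    rw [Finset.prod_eq_single i0]
    · simp
    · intro j _ hj
      rw [if_neg hj]
      exact hP0 _
    · intro h
      exact absurd (Finset.mem_univ i0) h

lemma OPart_sum_index {r : ℕ} (S : Finset ℝ) (i0 : Fin (r+1)) (q : ℝ → ℝ) :
    ∑ g ∈ OPart (r+1) S, q (∑ c ∈ g i0, c) = ∑ g ∈ OPart (r+1) S, q (∑ c ∈ g 0, c) := by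
  apply Finset.sum_nbij' (fun g => g ∘ Equiv.swap 0 i0) (fun g => g ∘ Equiv.swap 0 i0)
  · intro g hg; exact OPart_comp_equiv hg _
  · intro g hg; exact OPart_comp_equiv hg _
  · intro g _; funext j; simp [Function.comp, Equiv.swap_apply_self]
  · intro g _; funext j; simp [Function.comp, Equiv.swap_apply_self]
  · intro g _
    simp [Function.comp, Equiv.swap_apply_left]

open scoped Classical in
lemma inner_total (P : ℕ → Polynomial ℝ) (hP0 : ∀ x, (P 0).eval x = 1)
    (hP1 : ∀ x, (P 1).eval x = x * (x - 1) / 2) (S : Finset ℝ) (r : ℕ) :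
    ∑ f ∈ (Fintype.piFinset fun _ : Fin (r+1) => S.powerset ×ˢ Finset.range (1 + 1)).filter
        (fun f => (∀ i, ((f i).1).Nonempty) ∧
          (∀ i j, i ≠ j → Disjoint (f i).1 (f j).1) ∧
          (Finset.univ.biUnion fun i => (f i).1) = S ∧
          ∑ i, (f i).2 = 1),
      (-1 : ℝ) ^ (r+1) * (1 / ((r+1 : ℕ) : ℝ)) * ∏ i, (P (f i).2).eval (∑ c ∈ (f i).1, c)
    = ∑ B ∈ S.powerset.filter (fun B => B.Nonempty),
        ∑ g ∈ OPart r (S \ B),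
          (-1 : ℝ) ^ (r+1) * ((∑ c ∈ B, c) * ((∑ c ∈ B, c) - 1) / 2) := by
  rw [inner_step P hP0 S r]
  rw [Finset.sum_product]
  rw [Finset.sum_comm]
  have hswap : ∀ i0 ∈ (Finset.univ : Finset (Fin (r+1))),
      ∑ g ∈ OPart (r+1) S,
          (-1 : ℝ) ^ (r+1) * (1 / ((r+1 : ℕ) : ℝ)) * (P 1).eval (∑ c ∈ g i0, c)
        = ∑ g ∈ OPart (r+1) S,
          (-1 : ℝ) ^ (r+1) * (1 / ((r+1 : ℕ) : ℝ)) * (P 1).eval (∑ c ∈ g 0, c) :=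
    fun i0 _ => OPart_sum_index S i0
      (fun y => (-1 : ℝ) ^ (r+1) * (1 / ((r+1 : ℕ) : ℝ)) * (P 1).eval y)
  rw [Finset.sum_congr rfl hswap, Finset.sum_const, Finset.card_univ, Fintype.card_fin,
    nsmul_eq_mul, Finset.mul_sum]
  rw [OPart_peel (fun g => ((r+1 : ℕ) : ℝ) *
    ((-1 : ℝ) ^ (r+1) * (1 / ((r+1 : ℕ) : ℝ)) * (P 1).eval (∑ c ∈ g 0, c)))]
  apply Finset.sum_congr rfl
  intro B _
  apply Finset.sum_congr rfl
  intro g _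
  rw [Fin.cons_zero, hP1]
  have hr : ((r+1 : ℕ) : ℝ) ≠ 0 := by positivity
  field_simp

noncomputable def Dsum (T : Finset ℝ) (p : ℝ → ℝ) : ℝ :=
  ∑ B ∈ T.powerset, (-1 : ℝ) ^ B.card * p (∑ c ∈ B, c)

lemma Dsum_insert {T : Finset ℝ} {a : ℝ} (ha : a ∉ T) (p : ℝ → ℝ) :
    Dsum (insert a T) p = Dsum T (fun x => p x - p (x + a)) := by
  classical
  unfold Dsum
  rw [Finset.sum_powerset_insert ha]
  have h2 : ∀ B ∈ T.powerset, (-1 : ℝ)^(insert a B).card * p (∑ c ∈ insert a B, c)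
      = -((-1)^B.card * p ((∑ c ∈ B, c) + a)) := by
    intro B hB
    have haB : a ∉ B := fun h => ha (Finset.mem_powerset.mp hB h)
    rw [Finset.card_insert_of_notMem haB, Finset.sum_insert haB, pow_succ, add_comm a]
    ring
  rw [Finset.sum_congr rfl h2]
  have h3 : ∀ B ∈ T.powerset, (-1 : ℝ)^B.card * (p (∑ c ∈ B, c) - p ((∑ c ∈ B, c) + a))
      = (-1)^B.card * p (∑ c ∈ B, c) + -((-1)^B.card * p ((∑ c ∈ B, c) + a)) := by
    intro B _; ring
  rw [Finset.sum_congr rfl h3, Finset.sum_add_distrib]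

lemma Dsum_q_zero (S : Finset ℝ) (h : 3 ≤ S.card) :
    Dsum S (fun x => x * (x - 1) / 2) = 0 := by
  classical
  have h1 : S.card = (S.card - 1) + 1 := by omega
  obtain ⟨a, T1, ha, rfl, hT1⟩ := Finset.card_eq_succ.mp h1
  have h2 : T1.card = (T1.card - 1) + 1 := by omega
  obtain ⟨b, T2, hb, rfl, hT2⟩ := Finset.card_eq_succ.mp h2
  have h3 : T2.card = (T2.card - 1) + 1 := by omega
  obtain ⟨c, T3, hc, rfl, hT3⟩ := Finset.card_eq_succ.mp h3
  rw [Dsum_insert ha, Dsum_insert hb, Dsum_insert hc]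
  have key : (fun x => (fun x => (fun x => (fun x => x * (x - 1) / 2) x
        - (fun x => x * (x - 1) / 2) (x + a)) x
      - (fun x => (fun x => x * (x - 1) / 2) x - (fun x => x * (x - 1) / 2) (x + a)) (x + b)) x
      - (fun x => (fun x => (fun x => x * (x - 1) / 2) x
        - (fun x => x * (x - 1) / 2) (x + a)) x
      - (fun x => (fun x => x * (x - 1) / 2) x - (fun x => x * (x - 1) / 2) (x + a)) (x + b)) (x + c))
      = fun _ : ℝ => (0 : ℝ) := by
    funext x
    simp only
    ring
  rw [key]
  simp [Dsum]

theorem weighted_config_identity_g6_w1 (P : ℕ → Polynomial ℝ) (hP : IsStirlingPoly P)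
    (S : Finset ℝ) (hS : S.card = 6) :
    weightedConfigSum P S 1 = 0 := by
  have hP0 := P_zero_eval P hP
  have hP1 := P_one_eval P hP
  unfold weightedConfigSum
  rw [hS, Finset.sum_range_succ']
  have hz : ∀ (t : Finset (Fin 0 → Finset ℝ × ℕ)),
      ∑ f ∈ t, (-1:ℝ)^(0:ℕ) * (1/((0:ℕ):ℝ)) * ∏ i, (P (f i).2).eval (∑ c ∈ (f i).1, c) = 0 :=
    fun t => Finset.sum_eq_zero fun f _ => by norm_num
  rw [hz, add_zero]
  refine (Finset.sum_congr rfl fun r _ => inner_total P hP0 hP1 S r).trans ?_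
  rw [Finset.sum_comm]
  have hB : ∀ B ∈ S.powerset.filter (fun B => B.Nonempty),
      ∑ r ∈ Finset.range 6, ∑ g ∈ OPart r (S \ B),
          (-1:ℝ)^(r+1) * ((∑ c ∈ B, c) * ((∑ c ∈ B, c) - 1) / 2)
        = -((-1:ℝ)^B.card * ((∑ c ∈ B, c) * ((∑ c ∈ B, c) - 1) / 2)) := by
    intro B hBm
    rw [Finset.mem_filter, Finset.mem_powerset] at hBm
    obtain ⟨hBsub, hBne⟩ := hBm
    have hcard : (S \ B).card = S.card - B.card := Finset.card_sdiff_of_subset hBsub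
    have hBpos : 1 ≤ B.card := Finset.card_pos.mpr hBne
    have hBle : B.card ≤ S.card := Finset.card_le_card hBsub
    have h1 : ∑ r ∈ Finset.range 6, ∑ g ∈ OPart r (S \ B),
        (-1:ℝ)^(r+1) * ((∑ c ∈ B, c) * ((∑ c ∈ B, c) - 1) / 2)
        = (-((∑ c ∈ B, c) * ((∑ c ∈ B, c) - 1) / 2)) * ONum 6 (S \ B) := by
      unfold ONum
      rw [Finset.mul_sum]
      apply Finset.sum_congr rfl
      intro r _
      rw [Finset.mul_sum]
      apply Finset.sum_congr rfl
      intro g _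
      ring
    have hlt : (S \ B).card < 6 := by omega
    rw [h1, ONum_eval (S \ B).card (S \ B) 6 le_rfl hlt, hcard, hS,
      neg_one_pow_sub (by omega : B.card ≤ 6)]
    norm_num
    ring
  rw [Finset.sum_congr rfl hB]
  have hsplit := Finset.sum_filter_add_sum_filter_not S.powerset (fun B => B.Nonempty)
    (fun B => -((-1:ℝ)^B.card * ((∑ c ∈ B, c) * ((∑ c ∈ B, c) - 1) / 2)))
  have hnot : S.powerset.filter (fun B => ¬ B.Nonempty) = {∅} := by
    ext B
    simp [Finset.not_nonempty_iff_eq_empty]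
    rintro rfl
    exact Finset.empty_subset S
  rw [hnot, Finset.sum_singleton] at hsplit
  have hempty : -((-1:ℝ)^(∅ : Finset ℝ).card * ((∑ c ∈ (∅ : Finset ℝ), c) *
      ((∑ c ∈ (∅ : Finset ℝ), c) - 1) / 2)) = 0 := by
    simp
  rw [hempty, add_zero] at hsplit
  rw [hsplit]
  have hD : ∑ B ∈ S.powerset, -((-1:ℝ)^B.card * ((∑ c ∈ B, c) * ((∑ c ∈ B, c) - 1) / 2))
      = -Dsum S (fun x => x * (x - 1) / 2) := by
    unfold Dsum
    rw [← Finset.sum_neg_distrib]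
  rw [hD, Dsum_q_zero S (by omega), neg_zero]
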